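/- For all b, t > 0 and all z ∈ ℝ, the series ∑_{k∈ℤ} G_t(z + 2bk) converges and satisfies ∑_{k∈ℤ} G_t(z + 2bk) ≤ 2/√(2πt) + 2/b. -/

import Mathlib

open MeasureTheory Set Real

/-- One-sided integral test: if `f` is nonnegative, continuous, integrable with integral at
most `I`, and antitone on `[c, ∞)`, then `∑_{n≥0} f (c + 1 + n)` converges and is at most `I`. -/
lemma one_side_bound (f : ℝ → ℝ) (I c : ℝ) (hc : Continuous f) (h0 : ∀ x, 0 ≤ f x)
    (hint : Integrable f) (hI : ∫ x, f x ≤ I) (ha : AntitoneOn f (Set.Ici c)) :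
    Summable (fun n : ℕ => f (c + 1 + n)) ∧ ∑' n : ℕ, f (c + 1 + n) ≤ I := by
  have hii : ∀ a d : ℝ, IntervalIntegrable f volume a d := fun a d => hc.intervalIntegrable a d
  have key : ∀ n : ℕ, f (c + 1 + n) ≤ ∫ x in (c + n)..(c + n + 1), f x := by
    intro n
    have h1 : (∫ _x in (c + n)..(c + n + 1), f (c + n + 1)) ≤ ∫ x in (c + n)..(c + n + 1), f x := by
      apply intervalIntegral.integral_mono_on (by linarith) intervalIntegrable_const (hii _ _)
      intro x hx
      have hn : (0:ℝ) ≤ n := Nat.cast_nonneg n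
      have hx1 := hx.1
      have hx2 := hx.2
      exact ha (by simp only [Set.mem_Ici]; linarith : x ∈ Set.Ici c)
        (by simp only [Set.mem_Ici]; linarith : c + n + 1 ∈ Set.Ici c) hx2
    have : c + 1 + (n:ℝ) = c + n + 1 := by ring
    rw [this]
    simpa using h1
  have hsum : ∀ N : ℕ, ∑ n ∈ Finset.range N, f (c + 1 + n) ≤ I := by
    intro N
    have adj : ∑ n ∈ Finset.range N, (∫ x in (c + n)..(c + n + 1), f x)
        = ∫ x in c..(c + N), f x := by
      have h := intervalIntegral.sum_integral_adjacent_intervals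
        (a := fun k : ℕ => c + k) (n := N) (f := f) (μ := volume) (fun k _ => hii _ _)
      simp only [Nat.cast_zero, add_zero, Nat.cast_add, Nat.cast_one] at h
      rw [← h]
      exact Finset.sum_congr rfl fun n _ => by ring_nf
    calc ∑ n ∈ Finset.range N, f (c + 1 + n)
        ≤ ∑ n ∈ Finset.range N, ∫ x in (c + n)..(c + n + 1), f x :=
          Finset.sum_le_sum fun n _ => key n
      _ = ∫ x in c..(c + N), f x := adj
      _ ≤ I := by
          rw [intervalIntegral.integral_of_le (by linarith [Nat.cast_nonneg (α := ℝ) N] : c ≤ c + (N:ℝ))]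
          exact le_trans (setIntegral_le_integral hint (Filter.Eventually.of_forall h0)) hI
  have hS : Summable (fun n : ℕ => f (c + 1 + n)) :=
    summable_of_sum_range_le (fun n => h0 _) hsum
  exact ⟨hS, tsum_le_of_sum_range_le (fun n => h0 _) hsum⟩

/-- Integral test for lattice sums of a unimodal nonnegative function. -/
lemma lattice_unimodal_bound (f : ℝ → ℝ) (m M I : ℝ)
    (hc : Continuous f) (h0 : ∀ x, 0 ≤ f x) (hM : ∀ x, f x ≤ M)
    (hint : Integrable f) (hI : ∫ x, f x ≤ I)
    (ha : AntitoneOn f (Set.Ici m)) (hmo : MonotoneOn f (Set.Iic m)) :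
    Summable (fun k : ℤ => f k) ∧ ∑' k : ℤ, f k ≤ 2 * M + 2 * I := by
  set n0 : ℤ := ⌊m⌋ with hn0
  have hfl : (n0 : ℝ) ≤ m := Int.floor_le m
  have hfl' : m < (n0 : ℝ) + 1 := Int.lt_floor_add_one m
  -- positive side
  have hpos := one_side_bound f I ((n0:ℝ) + 1) hc h0 hint hI
    (ha.mono (fun x hx => le_trans hfl'.le hx))
  -- negative side, using reflection
  have hneg : Summable (fun n : ℕ => f (-((-(n0:ℝ)) + 1 + n))) ∧
      ∑' n : ℕ, f (-((-(n0:ℝ)) + 1 + n)) ≤ I := by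
    have hcg : Continuous (fun x : ℝ => f (-x)) := hc.comp continuous_neg
    have h0g : ∀ x, 0 ≤ f (-x) := fun x => h0 _
    have hintg : Integrable (fun x : ℝ => f (-x)) := by
      have := ((Measure.measurePreserving_neg (volume : Measure ℝ)).integrable_comp
        hint.1).mpr hint
      exact this
    have hIg : ∫ x, f (-x) ≤ I := by
      rw [integral_neg_eq_self f (volume : Measure ℝ)]; exact hI
    have hag : AntitoneOn (fun x : ℝ => f (-x)) (Set.Ici (-(n0:ℝ))) := by
      intro u hu v hv huv
      exact hmo (by simp at hv ⊢; linarith [hfl] : -v ∈ Set.Iic m)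
        (by simp at hu ⊢; linarith [hfl] : -u ∈ Set.Iic m) (by linarith)
    exact one_side_bound (fun x => f (-x)) I (-(n0:ℝ)) hcg h0g hintg hIg hag
  -- assemble natural-number parts
  set P : ℕ → ℝ := fun n => f ((n0:ℝ) + n) with hP
  have htailP : (fun n : ℕ => P (n + 2)) = fun n : ℕ => f ((n0:ℝ) + 1 + 1 + n) := by
    funext n; simp only [hP]; push_cast; ring_nf
  have hPsummable : Summable P := by
    rw [← summable_nat_add_iff 2]
    rw [htailP]; exact hpos.1
  have hPsum : ∑' n, P n ≤ 2 * M + I := by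
    have h2 := hPsummable.sum_add_tsum_nat_add 2
    rw [← h2]
    have htail : ∑' n : ℕ, P (n + 2) ≤ I := by rw [htailP]; exact hpos.2
    have h01 : ∑ i ∈ Finset.range 2, P i ≤ 2 * M := by
      simp [Finset.sum_range_succ, hP]
      linarith [hM ((n0:ℝ) + 0), hM ((n0:ℝ) + 1), hM (n0:ℝ)]
    linarith
  set Q : ℕ → ℝ := fun n => f ((n0:ℝ) - 1 - n) with hQ
  have hQeq : Q = fun n : ℕ => f (-((-(n0:ℝ)) + 1 + n)) := by
    funext n; simp only [hQ]; ring_nf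
  have hQsummable : Summable Q := by rw [hQeq]; exact hneg.1
  have hQsum : ∑' n, Q n ≤ I := by rw [hQeq]; exact hneg.2
  -- combine into a ℤ-indexed sum
  set g : ℤ → ℝ := fun j => f (((n0 + j : ℤ) : ℝ)) with hg
  have hgP : (fun n : ℕ => g n) = P := by
    funext n; simp only [hg, hP]; push_cast; ring_nf
  have hgQ : (fun n : ℕ => g (-(n + 1))) = Q := by
    funext n; simp only [hg, hQ]; push_cast; ring_nf
  have hgsummable : Summable g :=
    Summable.of_nat_of_neg_add_one (hgP ▸ hPsummable) (hgQ ▸ hQsummable)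
  have hgsum : ∑' j, g j ≤ 2 * M + 2 * I := by
    rw [tsum_of_nat_of_neg_add_one (hgP ▸ hPsummable) (hgQ ▸ hQsummable)]
    rw [hgP, hgQ]
    linarith
  -- reindex by the equivalence `j ↦ n0 + j`
  have hequiv : g = (fun k : ℤ => f k) ∘ (Equiv.addLeft n0) := by
    funext j; simp [hg]
  constructor
  · rw [hequiv] at hgsummable
    exact (Equiv.addLeft n0).summable_iff.mp hgsummable
  · have heq : ∑' k : ℤ, f (k:ℝ) = ∑' j : ℤ, g j := by
      rw [← Equiv.tsum_eq (Equiv.addLeft n0) (fun k : ℤ => f (k:ℝ))]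
      exact tsum_congr fun j => by simp [hg]
    rw [heq]
    exact hgsum

/-- The Gaussian kernel `G_t(x) = e^{−x²/(2t)}/√(2πt)`. -/
noncomputable def GaussKernel (t x : ℝ) : ℝ :=
  Real.exp (-x ^ 2 / (2 * t)) / Real.sqrt (2 * Real.pi * t)

/-- Lattice Gaussian sum bound: for `b, t > 0` and `z ∈ ℝ`, the series
`∑_{k∈ℤ} G_t(z + 2bk)` converges and is at most `2/√(2πt) + 2/b`. -/
theorem stmt5 (b t z : ℝ) (hb : 0 < b) (ht : 0 < t) :
    Summable (fun k : ℤ => GaussKernel t (z + 2 * b * (k : ℝ))) ∧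
    ∑' k : ℤ, GaussKernel t (z + 2 * b * (k : ℝ))
      ≤ 2 / Real.sqrt (2 * Real.pi * t) + 2 / b := by
  have hpi := Real.pi_pos
  set s : ℝ := Real.sqrt (2 * Real.pi * t) with hs_def
  have hs : 0 < s := Real.sqrt_pos.mpr (by positivity)
  set f : ℝ → ℝ := fun x => GaussKernel t (z + 2 * b * x) with hf_def
  have hfx : ∀ x, f x = Real.exp (-(z + 2*b*x)^2/(2*t)) / s := fun x => rfl
  have hc : Continuous f := by
    simp only [hf_def, GaussKernel]
    exact (Real.continuous_exp.comp (by continuity)).div_const s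
  have h0 : ∀ x, 0 ≤ f x := fun x => by
    rw [hfx]; positivity
  have hM : ∀ x, f x ≤ 1 / s := fun x => by
    rw [hfx]
    refine (div_le_div_iff_of_pos_right hs).mpr (Real.exp_le_one_iff.mpr ?_)
    exact div_nonpos_of_nonpos_of_nonneg (neg_nonpos.mpr (sq_nonneg _)) (by positivity)
  -- integrability of the basic Gaussian
  have hgauss_eq : (fun y : ℝ => Real.exp (-y^2/(2*t)))
      = fun y : ℝ => Real.exp (-(2*t)⁻¹ * y^2) := by
    funext y; congr 1; field_simp
  have hg : Integrable (fun y : ℝ => Real.exp (-y^2/(2*t))) := by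
    rw [hgauss_eq]
    exact integrable_exp_neg_mul_sq (by positivity)
  have h2b : (2*b) ≠ 0 := by positivity
  have hg2 : Integrable (fun x : ℝ => Real.exp (-(2*b*x)^2/(2*t))) := by
    have := hg.comp_smul (μ := (volume : Measure ℝ)) (R := 2*b) h2b
    simpa [smul_eq_mul] using this
  have hcomp : (fun x : ℝ => Real.exp (-(z + 2*b*x)^2/(2*t)))
      = fun x : ℝ => Real.exp (-(2*b*(x + z/(2*b)))^2/(2*t)) := by
    funext x; congr 3; field_simp; ring
  have hg3 : Integrable (fun x : ℝ => Real.exp (-(z + 2*b*x)^2/(2*t))) := by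
    rw [hcomp]
    have := ((measurePreserving_add_right (volume : Measure ℝ) (z/(2*b))).integrable_comp
      hg2.1).mpr hg2
    exact this
  have hint : Integrable f := by
    have := hg3.div_const s
    simpa [hf_def, GaussKernel] using this
  -- integral value
  have hI : ∫ x, f x ≤ 1/(2*b) := by
    have e1 : ∫ x, f x = (∫ x, Real.exp (-(z + 2*b*x)^2/(2*t))) / s := by
      simp only [hf_def, GaussKernel]
      rw [integral_div]
    have e2 : ∫ x, Real.exp (-(z + 2*b*x)^2/(2*t))
        = ∫ x, Real.exp (-(2*b*x)^2/(2*t)) := by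
      rw [hcomp]
      exact integral_add_right_eq_self (fun x : ℝ => Real.exp (-(2*b*x)^2/(2*t))) (z/(2*b))
    have e3 : ∫ x, Real.exp (-(2*b*x)^2/(2*t)) = (2*b)⁻¹ * s := by
      have := Measure.integral_comp_mul_left (fun y : ℝ => Real.exp (-y^2/(2*t))) (2*b)
      rw [this]
      rw [hgauss_eq, integral_gaussian]
      rw [abs_of_pos (by positivity : (0:ℝ) < (2*b)⁻¹), smul_eq_mul]
      congr 1
      rw [hs_def]
      congr 1
      field_simp
    rw [e1, e2, e3]
    rw [mul_div_assoc, div_self hs.ne', mul_one, one_div]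
  -- monotonicity
  have key_sq : ∀ u v : ℝ, -z/(2*b) ≤ u → u ≤ v → (z + 2*b*u)^2 ≤ (z + 2*b*v)^2 := by
    intro u v hu huv
    have h1 : 0 ≤ z + 2*b*u := by
      rw [div_le_iff₀ (by positivity : (0:ℝ) < 2*b)] at hu
      nlinarith
    have h2 : z + 2*b*u ≤ z + 2*b*v := by nlinarith
    exact pow_le_pow_left₀ h1 h2 2
  have key_sq2 : ∀ u v : ℝ, u ≤ v → v ≤ -z/(2*b) → (z + 2*b*v)^2 ≤ (z + 2*b*u)^2 := by
    intro u v huv hv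
    have h1 : z + 2*b*v ≤ 0 := by
      rw [le_div_iff₀ (by positivity : (0:ℝ) < 2*b)] at hv
      nlinarith
    have h2 : z + 2*b*u ≤ z + 2*b*v := by nlinarith
    nlinarith
  have ha : AntitoneOn f (Set.Ici (-z/(2*b))) := by
    intro u hu v hv huv
    rw [hfx, hfx]
    refine (div_le_div_iff_of_pos_right hs).mpr (Real.exp_le_exp.mpr ?_)
    refine (div_le_div_iff_of_pos_right (by positivity : (0:ℝ) < 2*t)).mpr (neg_le_neg ?_)
    exact key_sq u v hu huv
  have hmo : MonotoneOn f (Set.Iic (-z/(2*b))) := by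
    intro u hu v hv huv
    rw [hfx, hfx]
    refine (div_le_div_iff_of_pos_right hs).mpr (Real.exp_le_exp.mpr ?_)
    refine (div_le_div_iff_of_pos_right (by positivity : (0:ℝ) < 2*t)).mpr (neg_le_neg ?_)
    exact key_sq2 u v huv hv
  obtain ⟨h1, h2⟩ := lattice_unimodal_bound f (-z/(2*b)) (1/s) (1/(2*b))
    hc h0 hM hint hI ha hmo
  refine ⟨h1, ?_⟩
  have hfin : 2 * (1/s) + 2 * (1/(2*b)) ≤ 2/s + 2/b := by
    have hb2 : 2 * (1/(2*b)) = 1/b := by field_simp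
    have h12 : (1:ℝ)/b ≤ 2/b := (div_le_div_iff_of_pos_right hb).mpr one_le_two
    have hss : 2 * (1/s) = 2/s := by ring
    linarith [hb2, hss]
  exact h2.trans hfin
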